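/- Let κ be an infinite cardinal and G an abelian group with |G| ≤ κ⁺ such that the torsion part G[ℕ] has cardinality at most κ. Then G \ {0} can be covered by κ many linearly independent subsets. -/

import Mathlib

/-- Linear independence of a subset of an abelian group in the sense of Fuchs:
`Σ λᵢ • aᵢ = 0` with distinct `aᵢ` implies each `λᵢ • aᵢ = 0`. -/
def LinIndepSet {G : Type*} [AddCommGroup G] (A : Set G) : Prop :=
  ∀ (s : Finset G), ↑s ⊆ A → ∀ l : G → ℤ,
    ∑ a ∈ s, l a • a = 0 → ∀ a ∈ s, l a • a = 0

namespace Stmt12Aux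

open Cardinal

universe u

variable {G : Type u} [AddCommGroup G]

/-- Evaluation of a signed list of elements of `s`. -/
def eval (s : Set G) (L : List (s × Bool)) : G :=
  (L.map fun p => if p.2 then (p.1 : G) else -(p.1 : G)).sum

lemma eval_append (s : Set G) (L₁ L₂ : List (s × Bool)) :
    eval s (L₁ ++ L₂) = eval s L₁ + eval s L₂ := by
  simp [eval]

lemma eval_negList (s : Set G) (L : List (s × Bool)) :
    eval s (L.map fun p => (p.1, !p.2)) = - eval s L := by
  induction L with
  | nil => simp [eval]
  | cons p L ih =>
    obtain ⟨x, b⟩ := p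
    cases b <;> simp [eval] at ih ⊢ <;> rw [ih] <;> abel

/-- The subgroup generated by a set, realized as the range of `eval`. -/
def cl (s : Set G) : AddSubgroup G where
  carrier := Set.range (eval s)
  zero_mem' := ⟨[], rfl⟩
  add_mem' := by
    rintro a b ⟨L₁, rfl⟩ ⟨L₂, rfl⟩
    exact ⟨L₁ ++ L₂, eval_append s L₁ L₂⟩
  neg_mem' := by
    rintro a ⟨L, rfl⟩
    exact ⟨L.map fun p => (p.1, !p.2), eval_negList s L⟩

lemma subset_cl (s : Set G) : s ⊆ cl s := by
  intro x hx
  exact ⟨[(⟨x, hx⟩, true)], by simp [eval]⟩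

lemma eval_map_incl {s t : Set G} (hst : s ⊆ t) (L : List (s × Bool)) :
    eval t (L.map fun p => (⟨p.1.1, hst p.1.2⟩, p.2)) = eval s L := by
  induction L with
  | nil => rfl
  | cons p L ih => simp [eval] at ih ⊢; rw [ih]

lemma cl_mono {s t : Set G} (hst : s ⊆ t) : cl s ≤ cl t := by
  rintro a ⟨L, rfl⟩
  exact ⟨L.map fun p => (⟨p.1.1, hst p.1.2⟩, p.2), eval_map_incl hst L⟩

lemma mk_cl_le {s : Set G} {κ : Cardinal.{u}} (hκ : ℵ₀ ≤ κ) (hs : #s ≤ κ) :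
    #(cl s) ≤ κ := by
  have h1 : #(cl s) ≤ #(List (s × Bool)) := by
    have : #(Set.range (eval s)) ≤ #(List (s × Bool)) := Cardinal.mk_range_le
    exact this
  refine h1.trans ?_
  refine (Cardinal.mk_list_le_max _).trans (max_le hκ ?_)
  have h2 : #(s × Bool) = #s * 2 := by
    simp [Cardinal.mk_prod]
  rw [h2]
  calc #s * 2 ≤ κ * κ := mul_le_mul' hs ((le_of_lt (Cardinal.nat_lt_aleph0 2)).trans hκ)
    _ = κ := mul_eq_self hκ

/-- Saturation of a subgroup. -/
def sat (C : AddSubgroup G) : AddSubgroup G where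
  carrier := {x | ∃ n : ℕ, 0 < n ∧ n • x ∈ C}
  zero_mem' := ⟨1, one_pos, by simpa using AddSubgroup.zero_mem _⟩
  add_mem' := by
    rintro a b ⟨n, hn, ha⟩ ⟨m, hm, hb⟩
    refine ⟨n * m, Nat.mul_pos hn hm, ?_⟩
    rw [smul_add]
    have h1 : (n * m) • a = m • (n • a) := by rw [mul_comm, mul_smul]
    have h2 : (n * m) • b = n • (m • b) := by rw [mul_smul]
    rw [h1, h2]
    exact AddSubgroup.add_mem _ (AddSubgroup.nsmul_mem _ ha m) (AddSubgroup.nsmul_mem _ hb n)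
  neg_mem' := by
    rintro a ⟨n, hn, ha⟩
    exact ⟨n, hn, by rw [smul_neg]; exact AddSubgroup.neg_mem _ ha⟩

lemma mem_sat {C : AddSubgroup G} {x : G} :
    x ∈ sat C ↔ ∃ n : ℕ, 0 < n ∧ n • x ∈ C := Iff.rfl

lemma sat_mono {C C' : AddSubgroup G} (h : C ≤ C') : sat C ≤ sat C' := by
  rintro x ⟨n, hn, hx⟩
  exact ⟨n, hn, h hx⟩

lemma mk_sat_le {C : AddSubgroup G} {κ : Cardinal.{u}} (hκ : ℵ₀ ≤ κ)
    (hC : #C ≤ κ) (hT : #{x : G | ∃ n : ℕ, 0 < n ∧ n • x = 0} ≤ κ) :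
    #(sat C) ≤ κ := by
  classical
  set T := {x : G | ∃ n : ℕ, 0 < n ∧ n • x = 0} with hTdef
  have hch : ∀ x : sat C, ∃ n : ℕ, 0 < n ∧ n • (x : G) ∈ C := fun x => x.2
  choose n hn hmem using hch
  let key : sat C → ULift.{u} ℕ × C := fun x => (ULift.up (n x), ⟨n x • (x : G), hmem x⟩)
  have hne : Nonempty (sat C) := ⟨⟨0, AddSubgroup.zero_mem _⟩⟩
  let g : ULift.{u} ℕ × C → sat C := Function.invFun key
  have hg : ∀ x : sat C, key (g (key x)) = key x := fun x =>
    Function.invFun_eq (f := key) ⟨x, rfl⟩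
  have htors : ∀ x : sat C, ((x : G) - (g (key x) : G)) ∈ T := by
    intro x
    have h1 := hg x
    have hn_eq : n (g (key x)) = n x := congrArg (fun p => p.1.down) h1
    have hv_eq : n (g (key x)) • ((g (key x) : sat C) : G) = n x • (x : G) :=
      congrArg (fun p => (p.2 : G)) h1
    refine ⟨n x, hn x, ?_⟩
    rw [smul_sub, ← hn_eq, hv_eq, hn_eq, sub_self]
  let F : sat C → (ULift.{u} ℕ × C) × T := fun x => (key x, ⟨_, htors x⟩)
  have hF : Function.Injective F := by
    intro x y hxy
    have h1 : key x = key y := congrArg Prod.fst hxy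
    have h2 : (x : G) - (g (key x) : G) = (y : G) - (g (key y) : G) := by
      have := congrArg Prod.snd hxy
      exact Subtype.ext_iff.mp this
    rw [h1] at h2
    exact Subtype.ext (sub_left_inj.mp h2)
  have := Cardinal.mk_le_of_injective hF
  refine this.trans ?_
  have h1 : #((ULift.{u} ℕ × C) × T) = (ℵ₀ * #C) * #T := by
    simp [Cardinal.mk_prod, Cardinal.mk_uLift]
  rw [h1]
  calc (ℵ₀ * #C) * #T ≤ (κ * κ) * κ := by
        apply mul_le_mul' (mul_le_mul' hκ hC) hT
    _ = κ := by rw [mul_eq_self hκ, mul_eq_self hκ]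

end Stmt12Aux

open Cardinal in
theorem stmt12 {G : Type u} [AddCommGroup G] (κ : Cardinal.{u}) (hκ : ℵ₀ ≤ κ)
    (hG : #G ≤ Order.succ κ)
    (htor : #{x : G | ∃ n : ℕ, 0 < n ∧ n • x = 0} ≤ κ) :
    ∃ c : κ.out → Set G, (∀ i, LinIndepSet (c i)) ∧
      {x : G | x ≠ 0} ⊆ ⋃ i, c i := by
  classical
  obtain ⟨r⟩ : Nonempty (G ↪ (Order.succ κ).ord.ToType) := by
    rw [← Cardinal.le_def, Cardinal.mk_ord_toType]
    exact hG
  have hκ' : ℵ₀ ≤ Order.succ κ := hκ.trans (le_of_lt (Order.lt_succ κ))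
  have hnomax : NoMaxOrder (Order.succ κ).ord.ToType := Cardinal.noMaxOrder hκ'
  set T := {x : G | ∃ n : ℕ, 0 < n ∧ n • x = 0} with hTdef
  let S : (Order.succ κ).ord.ToType → Set G := fun z => T ∪ {g : G | r g < z}
  let H : (Order.succ κ).ord.ToType → AddSubgroup G := fun z => Stmt12Aux.sat (Stmt12Aux.cl (S z))
  have hSmono : ∀ {z z' : (Order.succ κ).ord.ToType}, z ≤ z' → S z ⊆ S z' := by
    intro z z' h x hx
    rcases hx with hx | hx
    · exact Or.inl hx
    · exact Or.inr (lt_of_lt_of_le hx h)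
  have hHmono : ∀ {z z' : (Order.succ κ).ord.ToType}, z ≤ z' → H z ≤ H z' :=
    fun h => Stmt12Aux.sat_mono (Stmt12Aux.cl_mono (hSmono h))
  have hHcard : ∀ z : (Order.succ κ).ord.ToType, #(H z) ≤ κ := by
    intro z
    apply Stmt12Aux.mk_sat_le hκ ?_ htor
    apply Stmt12Aux.mk_cl_le hκ
    have h1 : #{g : G | r g < z} ≤ κ := by
      have hinj : Function.Injective
          (fun g : {g : G | r g < z} => (⟨r g.1, g.2⟩ : {y : (Order.succ κ).ord.ToType // y < z})) := by
        intro a b hab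
        exact Subtype.ext (r.injective (Subtype.ext_iff.mp hab))
      refine (Cardinal.mk_le_of_injective hinj).trans ?_
      have h2 : #{y : (Order.succ κ).ord.ToType // y < z} < Order.succ κ := by
        have hwo : IsWellOrder (Order.succ κ).ord.ToType (· < ·) := isWellOrder_lt
        calc #{y : (Order.succ κ).ord.ToType // y < z}
            = (Ordinal.typein (α := (Order.succ κ).ord.ToType) (· < ·) z).card :=
              @Ordinal.card_typein _ _ hwo z
          _ < #((Order.succ κ).ord.ToType) :=
              @Cardinal.card_typein_lt _ _ hwo z
                (by rw [Cardinal.mk_ord_toType]; exact (Ordinal.type_toType _).symm)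
          _ = Order.succ κ := Cardinal.mk_ord_toType _
      exact Order.lt_succ_iff.mp h2
    refine (Cardinal.mk_union_le _ _).trans ?_
    calc #T + #{g : G | r g < z} ≤ κ + κ := add_le_add htor h1
      _ = κ := Cardinal.add_eq_self hκ
  have hmemH : ∀ x : G, ∃ z, x ∈ H z := by
    intro x
    obtain ⟨z, hz⟩ := exists_gt (r x)
    exact ⟨z, ⟨1, one_pos, by simpa using Stmt12Aux.subset_cl (S z) (Or.inr hz)⟩⟩
  have wf : WellFounded ((· < ·) : (Order.succ κ).ord.ToType → (Order.succ κ).ord.ToType → Prop) :=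
    IsWellFounded.wf
  let ℓ : G → (Order.succ κ).ord.ToType := fun x => wf.min {z | x ∈ H z} (hmemH x)
  have hlmem : ∀ x : G, x ∈ H (ℓ x) := fun x => wf.min_mem {z | x ∈ H z} (hmemH x)
  have hlmin : ∀ (x : G) (z), z < ℓ x → x ∉ H z := fun x z hz hx => wf.not_lt_min {z | x ∈ H z} hx hz
  have hecex : ∀ z, ∃ f : G → Quotient.out κ, Set.InjOn f (H z) := by
    intro z
    obtain ⟨emb⟩ : Nonempty (H z ↪ Quotient.out κ) := by
      rw [← Cardinal.le_def, Cardinal.mk_out]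
      exact hHcard z
    refine ⟨fun x => if h : x ∈ H z then emb ⟨x, h⟩ else emb ⟨0, (H z).zero_mem⟩, ?_⟩
    intro x hx y hy hxy
    have hx' : x ∈ H z := hx
    have hy' : y ∈ H z := hy
    simp only [dif_pos hx', dif_pos hy'] at hxy
    exact Subtype.ext_iff.mp (emb.injective hxy)
  choose e he using hecex
  refine ⟨fun i => {x : G | x ≠ 0 ∧ e (ℓ x) x = i}, ?_, ?_⟩
  swap
  · intro x hx
    exact Set.mem_iUnion.mpr ⟨e (ℓ x) x, hx, rfl⟩
  intro i s
  induction s using Finset.strongInduction with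
  | _ s ih =>
    intro hs l hsum a ha
    have hinjℓ : ∀ x ∈ s, ∀ y ∈ s, ℓ x = ℓ y → x = y := by
      intro x hx y hy hxy
      have hxi := (hs hx).2
      have hyi := (hs hy).2
      rw [hxy] at hxi
      exact he (ℓ y) (hxy ▸ hlmem x) (hlmem y) (hxi.trans hyi.symm)
    obtain ⟨m, hm, hmax⟩ := Finset.exists_max_image s ℓ ⟨a, ha⟩
    have hm0 : l m • m = 0 := by
      by_contra hne
      have hlm : l m ≠ 0 := fun h => hne (by rw [h, zero_smul])
      have hs'ne : (s.erase m).Nonempty := by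
        rw [Finset.nonempty_iff_ne_empty]
        intro h
        rcases (Finset.erase_eq_empty_iff s m).mp h with h' | h'
        · rw [h'] at hm; exact absurd hm (Finset.notMem_empty m)
        · rw [h', Finset.sum_singleton] at hsum; exact hne hsum
      obtain ⟨b₀, hb₀, hb₀max⟩ := Finset.exists_max_image _ ℓ hs'ne
      have hb₀m : b₀ ≠ m := (Finset.mem_erase.mp hb₀).1
      have hb₀s : b₀ ∈ s := (Finset.mem_erase.mp hb₀).2
      have hzlt : ℓ b₀ < ℓ m :=
        lt_of_le_of_ne (hmax b₀ hb₀s) (fun h => hb₀m (hinjℓ b₀ hb₀s m hm h))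
      have hsum1 : ∑ b ∈ s.erase m, l b • b ∈ H (ℓ b₀) :=
        sum_mem (fun b hb => AddSubgroup.zsmul_mem _ (hHmono (hb₀max b hb) (hlmem b)) _)
      have h3 : l m • m + ∑ b ∈ s.erase m, l b • b = ∑ b ∈ s, l b • b :=
        Finset.add_sum_erase s (fun b => l b • b) hm
      have heq : l m • m = - ∑ b ∈ s.erase m, l b • b := by
        rw [← h3] at hsum
        exact eq_neg_of_add_eq_zero_left hsum
      have hmemz : l m • m ∈ H (ℓ b₀) := heq ▸ AddSubgroup.neg_mem _ hsum1
      obtain ⟨n, hn, hnC⟩ := hmemz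
      have hk : ((n : ℤ) * l m) • m ∈ Stmt12Aux.cl (S (ℓ b₀)) := by
        have hh : (n : ℕ) • (l m • m) = ((n : ℤ) * l m) • m := by
          rw [← natCast_zsmul, smul_smul]
        rwa [hh] at hnC
      have hkne : (n : ℤ) * l m ≠ 0 := mul_ne_zero (Int.natCast_ne_zero.mpr hn.ne') hlm
      have hmHz : m ∈ H (ℓ b₀) := by
        refine ⟨((n : ℤ) * l m).natAbs, Int.natAbs_pos.mpr hkne, ?_⟩
        rw [← natCast_zsmul]
        rcases Int.natAbs_eq ((n : ℤ) * l m) with h | h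
        · rw [← h]; exact hk
        · have h' : ((((n : ℤ) * l m).natAbs : ℤ)) • m = -(((n : ℤ) * l m) • m) := by
            rw [← neg_smul]
            congr 1
            omega
          rw [h']
          exact AddSubgroup.neg_mem _ hk
      exact hlmin m (ℓ b₀) hzlt hmHz
    rcases eq_or_ne a m with rfl | ham
    · exact hm0
    · have h3 : l m • m + ∑ b ∈ s.erase m, l b • b = ∑ b ∈ s, l b • b :=
        Finset.add_sum_erase s (fun b => l b • b) hm
      rw [hm0, zero_add] at h3
      have hsum' : ∑ b ∈ s.erase m, l b • b = 0 := by rw [h3]; exact hsum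
      exact ih (s.erase m) (Finset.erase_ssubset hm)
        (fun x hx => hs (Finset.mem_of_mem_erase hx)) l hsum' a
        (Finset.mem_erase.mpr ⟨ham, ha⟩)
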